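/- (Opial's lemma) Let H be a real Hilbert space, x : [t₀,∞) → H, and S ⊆ H nonempty. Assume: (i) whenever t_n → ∞ and x(t_n) converges weakly to some point x̄, then x̄ ∈ S; (ii) for every z ∈ S the limit lim_{t→∞} ‖x(t) − z‖ exists. Then there exists z_∞ ∈ S such that x(t) converges weakly to z_∞ as t → ∞. -/

import Mathlib

open Filter Metric TopologicalSpace
set_option maxHeartbeats 1000000 in

lemma weak_seq_compact {H : Type*} [NormedAddCommGroup H] [InnerProductSpace ℝ H]
    [CompleteSpace H] (u : ℕ → H) (C : ℝ) (hu : ∀ n, ‖u n‖ ≤ C) :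
    ∃ (φ : ℕ → ℕ) (v : H), StrictMono φ ∧
      ∀ y : H, Tendsto (fun n => (inner ℝ (u (φ n)) y : ℝ)) atTop (nhds (inner ℝ v y)) := by
  classical
  set K : Submodule ℝ H := (Submodule.span ℝ (Set.range u)).topologicalClosure with hK
  haveI : CompleteSpace K :=
    (Submodule.span ℝ (Set.range u)).isClosed_topologicalClosure.completeSpace_coe
  have hsep : IsSeparable (K : Set H) :=
    ((Set.countable_range u).isSeparable.span).closure
  haveI : SeparableSpace K := hsep.separableSpace
  have humem : ∀ n, u n ∈ K := fun n =>
    (Submodule.span ℝ (Set.range u)).le_topologicalClosure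
      (Submodule.subset_span (Set.mem_range_self n))
  set un : ℕ → K := fun n => ⟨u n, humem n⟩ with hun
  set f : ℕ → WeakDual ℝ K :=
    fun n => StrongDual.toWeakDual (InnerProductSpace.toDual ℝ K (un n)) with hf
  set B : Set (WeakDual ℝ K) := WeakDual.toStrongDual ⁻¹' closedBall (0 : StrongDual ℝ K) C with hB
  have hBc : IsCompact B := WeakDual.isCompact_closedBall (𝕜 := ℝ) (E := K) 0 C
  have hfB : ∀ n, f n ∈ B := by
    intro n
    simp only [hB, Set.mem_preimage, mem_closedBall, dist_zero_right]
    have : ‖InnerProductSpace.toDual ℝ K (un n)‖ = ‖un n‖ :=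
      (InnerProductSpace.toDual ℝ K).norm_map _
    calc dist (WeakDual.toStrongDual (f n)) 0 = ‖WeakDual.toStrongDual (f n)‖ :=
        (dist_zero_right (WeakDual.toStrongDual (f n)) :)
      _ = ‖un n‖ := this
      _ = ‖u n‖ := rfl
      _ ≤ C := hu n
  -- metrizability of B
  haveI : Nonempty K := ⟨0⟩
  set d : ℕ → K := denseSeq K
  set g : WeakDual ℝ K → (ℕ → ℝ) := fun f k => f (d k) with hg
  have hgc : Continuous g := continuous_pi fun k => WeakDual.eval_continuous (d k)
  have hgi : Function.Injective g := by
    intro f₁ f₂ h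
    apply DFunLike.coe_injective
    refine Continuous.ext_on (denseRange_denseSeq K) (map_continuous f₁) (map_continuous f₂) ?_
    rintro - ⟨k, rfl⟩
    exact congrFun h k
  haveI : CompactSpace B := isCompact_iff_compactSpace.mp hBc
  have hval : Continuous (Subtype.val : B → WeakDual ℝ K) := continuous_subtype_val
  have hemb := (hgc.comp hval).isClosedEmbedding (hgi.comp Subtype.val_injective)
  haveI : MetrizableSpace B := hemb.isEmbedding.metrizableSpace
  obtain ⟨a, φ, hφ, hconv⟩ := CompactSpace.tendsto_subseq (fun n => (⟨f n, hfB n⟩ : B))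
  have hconv' : Tendsto (fun n => f (φ n)) atTop (nhds (a : WeakDual ℝ K)) :=
    (continuous_subtype_val.tendsto a).comp hconv
  have heval : ∀ m : K, Tendsto (fun n => f (φ n) m) atTop (nhds ((a : WeakDual ℝ K) m)) :=
    fun m => ((WeakDual.eval_continuous m).tendsto _).comp hconv'
  set v' : K := (InnerProductSpace.toDual ℝ K).symm (WeakDual.toStrongDual (a : WeakDual ℝ K))
  refine ⟨φ, (v' : H), hφ, ?_⟩
  intro y
  set P : K := K.orthogonalProjectionOnto y with hP
  have hortho : ∀ m : K, (inner ℝ (m : H) y : ℝ) = inner ℝ m P := by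
    intro m
    have h1 : y - (P : H) ∈ Kᗮ := K.sub_starProjection_mem_orthogonal y
    have h3 : (inner ℝ (m : H) (y - (P : H)) : ℝ) = 0 :=
      (Submodule.mem_orthogonal K _).mp h1 m m.2
    have h4 := inner_sub_right (𝕜 := ℝ) (m : H) y (P : H)
    rw [Submodule.coe_inner]
    rw [h4] at h3
    linarith
  have key : ∀ n, (inner ℝ (u n) y : ℝ) = f n P := by
    intro n
    have : f n P = (inner ℝ (un n) P : ℝ) := InnerProductSpace.toDual_apply_apply ..
    rw [this, ← hortho (un n)]
  have keylim : (inner ℝ (v' : H) y : ℝ) = (a : WeakDual ℝ K) P := by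
    have : (a : WeakDual ℝ K) P = (inner ℝ v' P : ℝ) := by
      simp only [v']
      rw [← InnerProductSpace.toDual_apply_apply (𝕜 := ℝ)]
      simp
    rw [this, ← hortho v']
  simp only [key, keylim]
  exact heval P


set_option maxHeartbeats 1000000 in

open Filter

theorem opial_lemma
    {H : Type*} [NormedAddCommGroup H] [InnerProductSpace ℝ H] [CompleteSpace H]
    (t₀ : ℝ) (x : ℝ → H) (S : Set H) (hS : S.Nonempty)
    (h1 : ∀ (tn : ℕ → ℝ) (xbar : H), (∀ n, t₀ ≤ tn n) → Tendsto tn atTop atTop →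
      (∀ y : H, Tendsto (fun n => (inner ℝ (x (tn n)) y : ℝ)) atTop (nhds (inner ℝ xbar y))) →
      xbar ∈ S)
    (h2 : ∀ z ∈ S, ∃ l : ℝ, Tendsto (fun t => ‖x t - z‖) atTop (nhds l)) :
    ∃ zlim ∈ S, ∀ y : H,
      Tendsto (fun t => (inner ℝ (x t) y : ℝ)) atTop (nhds (inner ℝ zlim y)) := by
  classical
  obtain ⟨z₀, hz₀⟩ := hS
  obtain ⟨l₀, hl₀⟩ := h2 z₀ hz₀
  set C : ℝ := l₀ + 1 + ‖z₀‖ with hC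
  obtain ⟨T₁, hT₁⟩ := eventually_atTop.mp (hl₀.eventually_lt_const (lt_add_one l₀))
  set T : ℝ := max T₁ t₀ with hT
  have ht₀T : t₀ ≤ T := le_max_right _ _
  have hCbound : ∀ t, T ≤ t → ‖x t‖ ≤ C := by
    intro t ht
    have h := hT₁ t (le_trans (le_max_left _ _) ht)
    calc ‖x t‖ = ‖x t - z₀ + z₀‖ := by rw [sub_add_cancel]
      _ ≤ ‖x t - z₀‖ + ‖z₀‖ := norm_add_le _ _
      _ ≤ C := by rw [hC]; linarith
  have main : ∀ s : ℕ → ℝ, (∀ n : ℕ, max T (n : ℝ) ≤ s n) →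
      ∃ (ψ : ℕ → ℕ) (w : H), w ∈ S ∧ Tendsto (fun n => s (ψ n)) atTop atTop ∧
        ∀ y, Tendsto (fun n => (inner ℝ (x (s (ψ n))) y : ℝ)) atTop (nhds (inner ℝ w y)) := by
    intro s hs
    obtain ⟨ψ, w, hψ, hconv⟩ := weak_seq_compact (fun n => x (s n)) C
      (fun n => hCbound _ (le_trans (le_max_left _ _) (hs n)))
    have htend : Tendsto (fun n => s (ψ n)) atTop atTop := by
      apply tendsto_atTop_mono (fun n => ?_) tendsto_natCast_atTop_atTop
      calc ((n : ℝ)) ≤ (ψ n : ℝ) := Nat.cast_le.mpr hψ.le_apply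
        _ ≤ max T (ψ n : ℝ) := le_max_right _ _
        _ ≤ s (ψ n) := hs (ψ n)
    refine ⟨ψ, w, ?_, htend, hconv⟩
    exact h1 (fun n => s (ψ n)) w
      (fun n => le_trans ht₀T (le_trans (le_max_left _ _) (hs (ψ n)))) htend hconv
  obtain ⟨ψ₀, z, hzS, ha, hz⟩ := main (fun n => max T (n : ℝ)) (fun n => le_refl _)
  refine ⟨z, hzS, ?_⟩
  intro y
  by_contra hny
  rw [Metric.tendsto_atTop] at hny
  push_neg at hny
  obtain ⟨ε, hε, hny⟩ := hny
  choose s hs1 hs2 using fun n : ℕ => hny (max T (n : ℝ))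
  obtain ⟨ψ, w, hwS, hb, hw⟩ := main s hs1
  -- uniqueness of weak limits
  obtain ⟨lz, hlz⟩ := h2 z hzS
  obtain ⟨lw, hlw⟩ := h2 w hwS
  set c : ℝ := ((lw ^ 2 - lz ^ 2 + ‖z‖ ^ 2) - ‖w‖ ^ 2) / 2 with hc
  have hXid : ∀ t : ℝ, (inner ℝ (x t) (z - w) : ℝ) =
      ((‖x t - w‖ ^ 2 - ‖x t - z‖ ^ 2 + ‖z‖ ^ 2) - ‖w‖ ^ 2) / 2 := by
    intro t
    have e1 := norm_sub_sq_real (x t) w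
    have e2 := norm_sub_sq_real (x t) z
    have e3 := inner_sub_right (𝕜 := ℝ) (x t) z w
    rw [e3]; linarith
  have hF : Tendsto (fun t => (inner ℝ (x t) (z - w) : ℝ)) atTop (nhds c) := by
    have := ((((hlw.pow 2).sub (hlz.pow 2)).add_const (‖z‖ ^ 2)).sub_const (‖w‖ ^ 2)).div_const 2
    simpa only [hXid] using this
  have e1 : (inner ℝ z (z - w) : ℝ) = c := tendsto_nhds_unique (hz (z - w)) (hF.comp ha)
  have e2 : (inner ℝ w (z - w) : ℝ) = c := tendsto_nhds_unique (hw (z - w)) (hF.comp hb)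
  have hwz : w = z := by
    have e3 : (inner ℝ (z - w) (z - w) : ℝ) = 0 := by
      rw [inner_sub_left]; rw [e1, e2]; ring
    have := inner_self_eq_zero (𝕜 := ℝ).mp e3
    exact (sub_eq_zero.mp this).symm
  have hconv := hw y
  rw [hwz] at hconv
  rw [Metric.tendsto_atTop] at hconv
  obtain ⟨N, hN⟩ := hconv ε hε
  exact absurd (hN N le_rfl) (not_lt.mpr (hs2 (ψ N)))
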